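/- Let m ≥ 2 be an integer and c any real constant. Define u : (0,∞) → ℝ by u(r) = (∫₀^r (sinh t)^(m-1) dt) / (sinh r)^(m-1). Then the function w(r) = c·u(r)/√(1 + c²·u(r)²) satisfies |w(r)| < 1 for all r > 0, is differentiable, and satisfies w'(r) = c·(1 − w(r)²)^(3/2) − (m−1)·coth(r)·w(r)·(1 − w(r)²) for all r > 0. -/

import Mathlib

/-- For `m ≥ 2` and any real `c`, with
`u r = (∫₀^r (sinh t)^(m-1) dt)/(sinh r)^(m-1)`, the function
`w = c u/√(1 + c²u²)` satisfies `|w| < 1` on `(0,∞)`, is differentiable there,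
and satisfies `w' = c (1-w²)^{3/2} - (m-1) coth r · w (1-w²)`. -/
theorem stmt_9 (m : ℕ) (hm : 2 ≤ m) (c : ℝ)
    (u : ℝ → ℝ)
    (hu : ∀ r : ℝ, u r =
      (∫ t in (0:ℝ)..r, Real.sinh t ^ (m - 1)) / Real.sinh r ^ (m - 1))
    (w : ℝ → ℝ)
    (hw : ∀ r : ℝ, w r = c * u r / Real.sqrt (1 + c ^ 2 * u r ^ 2)) :
    ∀ r : ℝ, 0 < r → |w r| < 1 ∧
      HasDerivAt w (c * (1 - w r ^ 2) ^ ((3:ℝ)/2)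
        - ((m : ℝ) - 1) * (Real.cosh r / Real.sinh r) * w r * (1 - w r ^ 2)) r := by
  intro r hr
  set k := m - 1 with hk
  have hk1 : 1 ≤ k := by omega
  have hkc : ((k : ℝ)) = (m : ℝ) - 1 := by
    rw [hk, Nat.cast_sub (by omega)]; norm_num
  have hs : 0 < Real.sinh r := Real.sinh_pos_iff.2 hr
  have hsne : Real.sinh r ≠ 0 := ne_of_gt hs
  -- positivity of q
  have hq : 0 < 1 + c ^ 2 * u r ^ 2 := by positivity
  have hsq : 0 < Real.sqrt (1 + c ^ 2 * u r ^ 2) := Real.sqrt_pos.2 hq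
  have hsq2 : Real.sqrt (1 + c ^ 2 * u r ^ 2) ^ 2 = 1 + c ^ 2 * u r ^ 2 :=
    Real.sq_sqrt hq.le
  -- |w| < 1
  have habs : |w r| < 1 := by
    rw [hw r, abs_div, abs_of_pos hsq, div_lt_one hsq]
    have : |c * u r| ^ 2 < Real.sqrt (1 + c ^ 2 * u r ^ 2) ^ 2 := by
      rw [hsq2, sq_abs]; nlinarith [sq_nonneg (c * u r)]
    exact lt_of_pow_lt_pow_left₀ 2 hsq.le this
  refine ⟨habs, ?_⟩
  -- derivative of u
  have hcont : Continuous fun t : ℝ => Real.sinh t ^ k := Real.continuous_sinh.pow k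
  have hI : HasDerivAt (fun x => ∫ t in (0:ℝ)..x, Real.sinh t ^ k)
      (Real.sinh r ^ k) r :=
    intervalIntegral.integral_hasDerivAt_right (hcont.intervalIntegrable 0 r)
      (hcont.stronglyMeasurableAtFilter _ _) hcont.continuousAt
  have hS : HasDerivAt (fun x => Real.sinh x ^ k)
      ((k : ℝ) * Real.sinh r ^ (k - 1) * Real.cosh r) r :=
    (Real.hasDerivAt_sinh r).pow k
  have hpow : Real.sinh r ^ (k - 1) * Real.sinh r = Real.sinh r ^ k := by
    rw [← pow_succ]; congr 1; omega
  have hUfun : u = fun x => (∫ t in (0:ℝ)..x, Real.sinh t ^ k) / Real.sinh x ^ k := by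
    funext x; exact hu x
  have hu' : HasDerivAt u (1 - ((m:ℝ) - 1) * (Real.cosh r / Real.sinh r) * u r) r := by
    rw [hUfun]
    have := hI.div hS (pow_ne_zero k hsne)
    convert this using 1
    · rfl
    · rfl
    · rfl
    beta_reduce
    have hIu : (∫ t in (0:ℝ)..r, Real.sinh t ^ k) = u r * Real.sinh r ^ k := by
      rw [hu r]; field_simp
    rw [hIu, ← hkc]
    field_simp
    rw [← hpow]
    ring
  set u' : ℝ := 1 - ((m:ℝ) - 1) * (Real.cosh r / Real.sinh r) * u r with hu'def
  -- derivative of w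
  have hA : HasDerivAt (fun x => 1 + c ^ 2 * u x ^ 2)
      (c ^ 2 * (2 * u r ^ 1 * u')) r := by
    have := (hasDerivAt_const r (1:ℝ)).add (((hu'.pow 2)).const_mul (c ^ 2))
    convert this using 1
    · rfl
    · rfl
    · rfl
    norm_num
  have hsqrt : HasDerivAt (fun x => Real.sqrt (1 + c ^ 2 * u x ^ 2))
      (c ^ 2 * (2 * u r ^ 1 * u') / (2 * Real.sqrt (1 + c ^ 2 * u r ^ 2))) r :=
    hA.sqrt (ne_of_gt hq)
  have hnum : HasDerivAt (fun x => c * u x) (c * u') r := hu'.const_mul c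
  have hwfun : w = fun x => c * u x / Real.sqrt (1 + c ^ 2 * u x ^ 2) := by
    funext x; exact hw x
  have hw' := hnum.div hsqrt (ne_of_gt hsq)
  rw [hwfun]
  convert hw' using 1
  · rfl
  · rfl
  · rfl
  beta_reduce
  rw [← hw r]
  -- algebraic identity
  have h1w : 1 - w r ^ 2 = 1 / (1 + c ^ 2 * u r ^ 2) := by
    rw [hw r, div_pow, hsq2]
    field_simp
    ring
  have hrpow : (1 / (1 + c ^ 2 * u r ^ 2)) ^ ((3:ℝ)/2)
      = 1 / ((1 + c ^ 2 * u r ^ 2) * Real.sqrt (1 + c ^ 2 * u r ^ 2)) := by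
    have h32 : ((3:ℝ)/2) = (1:ℝ) + 1/2 := by norm_num
    rw [h32, Real.rpow_add (by positivity), Real.rpow_one, ← Real.sqrt_eq_rpow,
      Real.sqrt_div' 1 hq.le, Real.sqrt_one]
    field_simp
  rw [h1w, hrpow, hw r, hu'def]
  have hss : Real.sqrt (1 + c ^ 2 * u r ^ 2) * Real.sqrt (1 + c ^ 2 * u r ^ 2)
      = 1 + c ^ 2 * u r ^ 2 := Real.mul_self_sqrt hq.le
  set S := Real.sqrt (1 + c ^ 2 * u r ^ 2) with hSdef
  have hSne : S ≠ 0 := ne_of_gt hsq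
  rw [← hss]
  field_simp
  linear_combination (-(c * (Real.sinh r - ((m:ℝ) - 1) * Real.cosh r * u r)))
    * hsq2
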